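/- arXiv:1210.6538 — 2 statements merged into one kernel-verified Lean document; each statement's English description precedes it below -/
import Mathlib

section
/- If every function computed by A has a computable trace bounded by a computable bound h₁, and every function computed by B has an A-computable trace bounded by a bound h₂ ≤_T A, and every A-computable function is dominated by a computable function, then every function computed by B has a computable trace bounded by the pointwise product h₁ · h̃₂ for some computable function h̃₂ dominating h₂. In particular, if A is computably traceable and B is computably traceable relative to A, then B is computably traceable. -/
/-- `OracleRecursiveIn O f` means the partial function `f : ℕ →. ℕ` is partial recursive
relative to the oracle `O : ℕ →. ℕ`. -/
inductive OracleRecursiveIn (O : ℕ →. ℕ) : (ℕ →. ℕ) → Prop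
  | oracle : OracleRecursiveIn O O
  | zero : OracleRecursiveIn O (pure 0)
  | succ : OracleRecursiveIn O Nat.succ
  | left : OracleRecursiveIn O fun n => (Nat.unpair n).1
  | right : OracleRecursiveIn O fun n => (Nat.unpair n).2
  | pair {f g : ℕ →. ℕ} : OracleRecursiveIn O f → OracleRecursiveIn O g →
      OracleRecursiveIn O fun n => Nat.pair <$> f n <*> g n
  | comp {f g : ℕ →. ℕ} : OracleRecursiveIn O f → OracleRecursiveIn O g →
      OracleRecursiveIn O fun n => g n >>= f
  | prec {f g : ℕ →. ℕ} : OracleRecursiveIn O f → OracleRecursiveIn O g →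
      OracleRecursiveIn O (Nat.unpaired fun a n =>
        n.rec (f a) fun y IH => do let i ← IH; g (Nat.pair a (Nat.pair y i)))
  | rfind {f : ℕ →. ℕ} : OracleRecursiveIn O f →
      OracleRecursiveIn O fun a => Nat.rfind fun n => (fun m => m = 0) <$> f (Nat.pair a n)

/-- Turing reducibility on total functions in Baire space. -/
def TuringLE (f g : ℕ → ℕ) : Prop := OracleRecursiveIn (↑g) (↑f)

/-- Turing equivalence. -/
def TuringEquiv (f g : ℕ → ℕ) : Prop := TuringLE f g ∧ TuringLE g f

/-- The join `f ⊕ g` of two elements of Baire space. -/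
def fjoin (f g : ℕ → ℕ) : ℕ → ℕ := fun n => if n % 2 = 0 then f (n / 2) else g (n / 2)

/-- A trace (with all sections finite) traces `g` if `g k ∈ T k` for all `k`. -/
def Traces (T : ℕ → Finset ℕ) (g : ℕ → ℕ) : Prop := ∀ k, g k ∈ T k

/-- A bound: a non-decreasing function with infinite (i.e. unbounded) range. -/
def IsBound (h : ℕ → ℕ) : Prop := Monotone h ∧ ∀ n, ∃ k, n ≤ h k

/-- `h` is a bound for the trace `T`. -/
def BoundFor (h : ℕ → ℕ) (T : ℕ → Finset ℕ) : Prop := ∀ k, (T k).card ≤ h k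

/-- A total function `f` is computable relative to the oracle `O`. -/
def FunRecIn (O : ℕ →. ℕ) (f : ℕ → ℕ) : Prop := OracleRecursiveIn O ↑f

/-- A trace is computable in the oracle `O` when the function giving (canonical indices
of) its sections is. -/
def TraceRecIn (O : ℕ →. ℕ) (T : ℕ → Finset ℕ) : Prop :=
  FunRecIn O fun k => Encodable.encode (T k)

/-- `f` is computably traceable: there is a single computable bound `h` such that every
total `g ≤_T f` is traced by a computable trace bounded by `h`. -/
def CompTraceable (f : ℕ → ℕ) : Prop :=
  ∃ h : ℕ → ℕ, Computable h ∧ IsBound h ∧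
    ∀ g : ℕ → ℕ, TuringLE g f → ∃ T : ℕ → Finset ℕ, Computable T ∧ Traces T g ∧ BoundFor h T

/-- `f` is computably traceable relative to `A`. -/
def CompTraceableIn (A f : ℕ → ℕ) : Prop :=
  ∃ h : ℕ → ℕ, TuringLE h A ∧ IsBound h ∧
    ∀ g : ℕ → ℕ, TuringLE g f → ∃ T : ℕ → Finset ℕ, TraceRecIn ↑A T ∧ Traces T g ∧ BoundFor h T

/-- `f` is hyperimmune-free: every function it computes is dominated by a computable
function. -/
def HIF (f : ℕ → ℕ) : Prop :=
  ∀ g : ℕ → ℕ, TuringLE g f → ∃ g' : ℕ → ℕ, Computable g' ∧ ∀ n, g n ≤ g' n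

namespace TraceAux
open Encodable Denumerable List


def sIns (a : ℕ) : List ℕ → List ℕ
  | [] => [a]
  | b :: t => if a < b then a :: b :: t else if a = b then b :: t else b :: sIns a t

def sortDedup (l : List ℕ) : List ℕ := l.foldr sIns []

theorem mem_sIns {x a : ℕ} : ∀ {l : List ℕ}, x ∈ sIns a l ↔ x = a ∨ x ∈ l
  | [] => by simp [sIns]
  | b :: t => by
    simp only [sIns]
    split_ifs with h1 h2
    · simp only [mem_cons]
    · subst h2; simp only [mem_cons]; tauto
    · simp only [mem_cons, mem_sIns (l := t)]; tauto

theorem sorted_sIns {a : ℕ} : ∀ {l : List ℕ}, l.Pairwise (· < ·) → (sIns a l).Pairwise (· < ·)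
  | [], _ => by simp [sIns]
  | b :: t, h => by
    rw [List.pairwise_cons] at h
    simp only [sIns]
    split_ifs with h1 h2
    · refine List.pairwise_cons.2 ⟨fun c hc => ?_, List.pairwise_cons.2 h⟩
      rcases List.mem_cons.1 hc with rfl | hc
      · exact h1
      · exact h1.trans (h.1 c hc)
    · exact List.pairwise_cons.2 h
    · refine List.pairwise_cons.2 ⟨fun c hc => ?_, sorted_sIns h.2⟩
      rcases mem_sIns.1 hc with rfl | hc
      · omega
      · exact h.1 c hc

theorem length_sIns (a : ℕ) : ∀ l : List ℕ, (sIns a l).length ≤ l.length + 1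
  | [] => by simp [sIns]
  | b :: t => by
    simp only [sIns]
    split_ifs with h1 h2
    · simp
    · simp
    · simpa using Nat.succ_le_succ (length_sIns a t)

theorem mem_sortDedup {x : ℕ} : ∀ {l : List ℕ}, x ∈ sortDedup l ↔ x ∈ l
  | [] => by simp [sortDedup]
  | b :: t => by
    show x ∈ sIns b (sortDedup t) ↔ _
    rw [mem_sIns]
    simp [mem_cons, mem_sortDedup (l := t)]

theorem sorted_sortDedup : ∀ l : List ℕ, (sortDedup l).Pairwise (· < ·)
  | [] => by simp [sortDedup]
  | b :: t => sorted_sIns (sorted_sortDedup t)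

theorem length_sortDedup_le : ∀ l : List ℕ, (sortDedup l).length ≤ l.length
  | [] => le_refl _
  | b :: t => by
    have := (length_sIns b (sortDedup t)).trans (Nat.succ_le_succ (length_sortDedup_le t))
    simpa [sortDedup] using this

/-- pair-accumulating version of `sIns`, suitable for `foldr`. -/
def sInsF (a : ℕ) (l : List ℕ) : List ℕ × List ℕ :=
  l.foldr (fun b p =>
    (b :: p.1, if a < b then a :: b :: p.1 else if a = b then b :: p.1 else b :: p.2))
    ([], [a])

theorem sInsF_eq (a : ℕ) : ∀ l : List ℕ, sInsF a l = (l, sIns a l)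
  | [] => rfl
  | b :: t => by
    have h : sInsF a (b :: t) = (b :: (sInsF a t).1,
        if a < b then a :: b :: (sInsF a t).1 else if a = b then b :: (sInsF a t).1
        else b :: (sInsF a t).2) := rfl
    rw [h, sInsF_eq a t]
    simp [sIns]

theorem primrec_sIns : Primrec₂ sIns := by
  have hstep : Primrec₂ fun (pa : ℕ × List ℕ) (q : ℕ × (List ℕ × List ℕ)) =>
      ((q.1 :: q.2.1, if pa.1 < q.1 then pa.1 :: q.1 :: q.2.1
        else if pa.1 = q.1 then q.1 :: q.2.1 else q.1 :: q.2.2) : List ℕ × List ℕ) := by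
    refine Primrec.pair (Primrec.list_cons.comp (Primrec.fst.comp Primrec.snd)
      (Primrec.fst.comp (Primrec.snd.comp Primrec.snd))) ?_
    refine Primrec.ite (Primrec.nat_lt.comp (Primrec.fst.comp Primrec.fst)
        (Primrec.fst.comp Primrec.snd)) ?_ ?_
    · exact Primrec.list_cons.comp (Primrec.fst.comp Primrec.fst)
        (Primrec.list_cons.comp (Primrec.fst.comp Primrec.snd)
          (Primrec.fst.comp (Primrec.snd.comp Primrec.snd)))
    · refine Primrec.ite (Primrec.eq.comp (Primrec.fst.comp Primrec.fst)
          (Primrec.fst.comp Primrec.snd)) ?_ ?_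
      · exact Primrec.list_cons.comp (Primrec.fst.comp Primrec.snd)
          (Primrec.fst.comp (Primrec.snd.comp Primrec.snd))
      · exact Primrec.list_cons.comp (Primrec.fst.comp Primrec.snd)
          (Primrec.snd.comp (Primrec.snd.comp Primrec.snd))
  have h : Primrec fun pa : ℕ × List ℕ => (sInsF pa.1 pa.2).2 := by
    have hf := Primrec.list_foldr (Primrec.snd (α := ℕ) (β := List ℕ))
      (Primrec.pair (Primrec.const ([] : List ℕ))
        (Primrec.list_cons.comp Primrec.fst (Primrec.const ([] : List ℕ))))
      hstep
    exact Primrec.snd.comp hf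
  exact h.of_eq fun ⟨a, l⟩ => by rw [sInsF_eq]

theorem primrec_sortDedup : Primrec sortDedup := by
  have h := Primrec.list_foldr (Primrec.id (α := List ℕ)) (Primrec.const ([] : List ℕ))
    (primrec_sIns.comp (Primrec.fst.comp Primrec.snd) (Primrec.snd.comp Primrec.snd)).to₂
  exact h.of_eq fun l => rfl

/-! `raise'`/`lower'` as primrec functions -/

theorem raise'_foldl : ∀ (l r : List ℕ) (n : ℕ),
    (l.foldl (fun (p : List ℕ × ℕ) m => ((m + p.2) :: p.1, m + p.2 + 1)) (r, n)).1
      = (raise' l n).reverse ++ r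
  | [], r, n => by simp [raise']
  | m :: l, r, n => by
    simp only [List.foldl_cons, raise', List.reverse_cons]
    rw [raise'_foldl l ((m + n) :: r) (m + n + 1)]
    simp

theorem lower'_foldl : ∀ (l r : List ℕ) (n : ℕ),
    (l.foldl (fun (p : List ℕ × ℕ) m => ((m - p.2) :: p.1, m + 1)) (r, n)).1
      = (lower' l n).reverse ++ r
  | [], r, n => by simp [lower']
  | m :: l, r, n => by
    simp only [List.foldl_cons, lower', List.reverse_cons]
    rw [lower'_foldl l ((m - n) :: r) (m + 1)]
    simp

theorem primrec_raise0 : Primrec (fun l : List ℕ => raise' l 0) := by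
  have hstep : Primrec₂ fun (p : List ℕ × ℕ) (m : ℕ) =>
      (((m + p.2) :: p.1, m + p.2 + 1) : List ℕ × ℕ) := by
    refine Primrec.pair ?_ ?_
    · exact Primrec.list_cons.comp
        (Primrec.nat_add.comp Primrec.snd (Primrec.snd.comp Primrec.fst))
        (Primrec.fst.comp Primrec.fst)
    · exact Primrec.succ.comp
        (Primrec.nat_add.comp Primrec.snd (Primrec.snd.comp Primrec.fst))
  have h := Primrec.list_foldl (Primrec.id (α := List ℕ))
    (Primrec.const (([], 0) : List ℕ × ℕ))
    (hstep.comp (Primrec.fst.comp Primrec.snd) (Primrec.snd.comp Primrec.snd)).to₂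
  have h2 := Primrec.list_reverse.comp (Primrec.fst.comp h)
  exact h2.of_eq fun l => by
    show (l.foldl _ (([], 0) : List ℕ × ℕ)).1.reverse = _
    rw [raise'_foldl l [] 0]
    simp

theorem primrec_lower0 : Primrec (fun l : List ℕ => lower' l 0) := by
  have hstep : Primrec₂ fun (p : List ℕ × ℕ) (m : ℕ) =>
      (((m - p.2) :: p.1, m + 1) : List ℕ × ℕ) := by
    refine Primrec.pair ?_ ?_
    · exact Primrec.list_cons.comp
        (Primrec.nat_sub.comp Primrec.snd (Primrec.snd.comp Primrec.fst))
        (Primrec.fst.comp Primrec.fst)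
    · exact Primrec.succ.comp Primrec.snd
  have h := Primrec.list_foldl (Primrec.id (α := List ℕ))
    (Primrec.const (([], 0) : List ℕ × ℕ))
    (hstep.comp (Primrec.fst.comp Primrec.snd) (Primrec.snd.comp Primrec.snd)).to₂
  have h2 := Primrec.list_reverse.comp (Primrec.fst.comp h)
  exact h2.of_eq fun l => by
    show (l.foldl _ (([], 0) : List ℕ × ℕ)).1.reverse = _
    rw [lower'_foldl l [] 0]
    simp

/-! converting between `Finset ℕ` (denumerable numbering) and lists -/

/-- encode wrt the `Denumerable` numbering on `Finset ℕ`. -/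
def encF (s : Finset ℕ) : ℕ := @Encodable.encode _ (Denumerable.toEncodable) s

/-- encode wrt the `Denumerable` numbering on `List ℕ`. -/
def encL (l : List ℕ) : ℕ := @Encodable.encode _ (Denumerable.toEncodable) l

theorem primrec_encF : Primrec encF := Primrec.encode

theorem primrec_encL : Primrec encL := Primrec.encode

def f2l (s : Finset ℕ) : List ℕ := raise' (ofNat (List ℕ) (encF s)) 0

def l2f (l : List ℕ) : Finset ℕ := ofNat (Finset ℕ) (encL (lower' (sortDedup l) 0))

theorem primrec_f2l : Primrec f2l :=
  primrec_raise0.comp ((Primrec.ofNat (List ℕ)).comp primrec_encF)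

theorem primrec_l2f : Primrec l2f :=
  (Primrec.ofNat (Finset ℕ)).comp
    (primrec_encL.comp (primrec_lower0.comp primrec_sortDedup))

theorem ofNat_finset_val (n : ℕ) :
    (ofNat (Finset ℕ) n).val = (↑(raise' (ofNat (List ℕ) n) 0) : Multiset ℕ) := by
  have h : ofNat (Finset ℕ) n
      = Finset.map (eqv ℕ).symm.toEmbedding (raise'Finset (ofNat (List ℕ) n) 0) :=
    ofNat_of_decode rfl
  rw [h]
  show Multiset.map _ (↑(raise' (ofNat (List ℕ) n) 0) : Multiset ℕ) = _
  rw [Multiset.map_coe]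
  exact congrArg _ (List.map_id'' (fun x => by simp [eqv]) _)

theorem f2l_coe (s : Finset ℕ) : (↑(f2l s) : Multiset ℕ) = s.val := by
  have h : ofNat (Finset ℕ) (encF s) = s := ofNat_encode s
  conv_rhs => rw [← h]
  rw [ofNat_finset_val]
  rfl

theorem mem_f2l {x : ℕ} {s : Finset ℕ} : x ∈ f2l s ↔ x ∈ s := by
  rw [Finset.mem_def, ← f2l_coe, Multiset.mem_coe]

theorem length_f2l (s : Finset ℕ) : (f2l s).length = s.card := by
  rw [Finset.card_def, ← f2l_coe]
  simp

theorem l2f_val (l : List ℕ) : (l2f l).val = (↑(sortDedup l) : Multiset ℕ) := by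
  have h : ofNat (List ℕ) (encL (lower' (sortDedup l) 0)) = lower' (sortDedup l) 0 :=
    ofNat_encode _
  rw [l2f, ofNat_finset_val, h,
    raise_lower' (fun m _ => Nat.zero_le m) (List.sortedLT_iff_pairwise.2 (sorted_sortDedup l))]

theorem mem_l2f {x : ℕ} {l : List ℕ} : x ∈ l2f l ↔ x ∈ l := by
  rw [Finset.mem_def, l2f_val, Multiset.mem_coe, mem_sortDedup]

theorem card_l2f_le (l : List ℕ) : (l2f l).card ≤ l.length := by
  rw [Finset.card_def, l2f_val]
  simpa using length_sortDedup_le l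


def dec (c : ℕ) : List ℕ := ((Encodable.decode c : Option (List ℕ))).getD []

theorem primrec_dec : Primrec dec :=
  Primrec.option_getD.comp Primrec.decode (Primrec.const [])

theorem dec_encode (s : Finset ℕ) : (↑(dec (Encodable.encode s)) : Multiset ℕ) = s.val := by
  have h : ((↑· : List ℕ → Multiset ℕ) <$> (decode (encode s) : Option (List ℕ)))
      = some s.val := by
    have he : (encode s : ℕ) = encode s.val := rfl
    rw [he]; exact encodek s.val
  rcases hd : (decode (encode s) : Option (List ℕ)) with _ | l
  · rw [hd] at h; simp at h
  · rw [hd] at h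
    show (↑((decode (encode s) : Option (List ℕ)).getD []) : Multiset ℕ) = s.val
    rw [hd, Option.getD_some]
    simpa using h

theorem mem_dec_encode {x : ℕ} {s : Finset ℕ} : x ∈ dec (Encodable.encode s) ↔ x ∈ s := by
  rw [Finset.mem_def, ← dec_encode s, Multiset.mem_coe]

theorem length_dec_encode (s : Finset ℕ) : (dec (Encodable.encode s)).length = s.card := by
  rw [Finset.card_def, ← dec_encode s]
  simp

/-! the trace-shrinking operation -/

def shrink (p : Finset ℕ × ℕ) : Finset ℕ :=
  l2f ((f2l p.1).flatMap fun c => if (dec c).length ≤ p.2 then dec c else [])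

theorem primrec_shrink : Primrec shrink := by
  refine primrec_l2f.comp (Primrec.list_flatMap (primrec_f2l.comp Primrec.fst) ?_)
  refine Primrec.ite (Primrec.nat_le.comp
      (Primrec.list_length.comp (primrec_dec.comp Primrec.snd))
      (Primrec.snd.comp Primrec.fst)) ?_ ?_
  · exact primrec_dec.comp Primrec.snd
  · exact Primrec.const []

theorem mem_shrink {x : ℕ} {S u : Finset ℕ} {b : ℕ}
    (hc : Encodable.encode S ∈ u) (hcard : S.card ≤ b) (hx : x ∈ S) : x ∈ shrink (u, b) := by
  rw [shrink, mem_l2f]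
  refine List.mem_flatMap.2 ⟨Encodable.encode S, mem_f2l.2 hc, ?_⟩
  rw [if_pos (by rw [length_dec_encode]; exact hcard)]
  exact mem_dec_encode.2 hx

theorem card_shrink_le (u : Finset ℕ) (b : ℕ) : (shrink (u, b)).card ≤ u.card * b := by
  refine (card_l2f_le _).trans ?_
  rw [List.length_flatMap]
  have hle : ∀ x ∈ List.map
      (List.length ∘ fun c => if (dec c).length ≤ b then dec c else []) (f2l u), x ≤ b := by
    intro x hx
    rcases List.mem_map.1 hx with ⟨c, _, rfl⟩
    simp only [Function.comp]
    split_ifs with h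
    · exact h
    · simp
  have h2 := List.sum_le_card_nsmul _ b hle
  simpa [length_f2l, smul_eq_mul, Function.comp_def] using h2

/-! max of a list, for hyperimmune-freeness -/

def lmax (l : List ℕ) : ℕ := l.foldr max 0

theorem primrec_lmax : Primrec lmax := by
  have h := Primrec.list_foldr (Primrec.id (α := List ℕ)) (Primrec.const 0)
    (Primrec.nat_max.comp (Primrec.fst.comp Primrec.snd) (Primrec.snd.comp Primrec.snd)).to₂
  exact h.of_eq fun l => rfl

theorem le_lmax {x : ℕ} : ∀ {l : List ℕ}, x ∈ l → x ≤ lmax l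
  | a :: t, h => by
    rcases List.mem_cons.1 h with rfl | h
    · exact le_max_left _ _
    · exact (le_lmax h).trans (le_max_right a (lmax t))

/-! running maximum -/

def runMax (d : ℕ → ℕ) (k : ℕ) : ℕ :=
  Nat.rec (max 1 (d 0)) (fun y IH => max IH (d (y + 1))) k

theorem computable_runMax {d : ℕ → ℕ} (hd : Computable d) : Computable (runMax d) := by
  have hh : Computable₂ fun (_ : ℕ) (p : ℕ × ℕ) => max p.2 (d (p.1 + 1)) :=
    Primrec.nat_max.to_comp.comp (Computable.snd.comp Computable.snd)
      (hd.comp (Computable.succ.comp (Computable.fst.comp Computable.snd)))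
  have h := Computable.nat_rec Computable.id (Computable.const (max 1 (d 0))) hh
  exact h.of_eq fun k => rfl

theorem monotone_runMax (d : ℕ → ℕ) : Monotone (runMax d) :=
  monotone_nat_of_le_succ fun _ => le_max_left _ _

theorem one_le_runMax (d : ℕ → ℕ) : ∀ k, 1 ≤ runMax d k
  | 0 => le_max_left _ _
  | k + 1 => (one_le_runMax d k).trans (le_max_left _ _)

theorem le_runMax (d : ℕ → ℕ) : ∀ k, d k ≤ runMax d k
  | 0 => le_max_right _ _
  | _ + 1 => le_max_right _ _

end TraceAux

open TraceAux in
theorem main_aux (A B h₁ h₂ : ℕ → ℕ)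
    (H1 : ∀ g : ℕ → ℕ, TuringLE g A →
      ∃ T : ℕ → Finset ℕ, Computable T ∧ Traces T g ∧ BoundFor h₁ T)
    (hle₂ : TuringLE h₂ A)
    (H2 : ∀ g : ℕ → ℕ, TuringLE g B →
      ∃ T : ℕ → Finset ℕ, TraceRecIn ↑A T ∧ Traces T g ∧ BoundFor h₂ T)
    (Hdom : ∀ g : ℕ → ℕ, TuringLE g A →
      ∃ g' : ℕ → ℕ, Computable g' ∧ ∀ n, g n ≤ g' n) :
    ∃ h₂' : ℕ → ℕ, Computable h₂' ∧ Monotone h₂' ∧ (∀ k, 1 ≤ h₂' k) ∧ (∀ n, h₂ n ≤ h₂' n) ∧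
      ∀ g : ℕ → ℕ, TuringLE g B →
        ∃ T : ℕ → Finset ℕ, Computable T ∧ Traces T g ∧
          BoundFor (fun k => h₁ k * h₂' k) T := by
  obtain ⟨d, hd, hdom⟩ := Hdom h₂ hle₂
  refine ⟨runMax d, computable_runMax hd, monotone_runMax d, one_le_runMax d,
    fun n => (hdom n).trans (le_runMax d n), ?_⟩
  intro g hg
  obtain ⟨S, hSrec, hStr, hSbd⟩ := H2 g hg
  obtain ⟨U, hUc, hUtr, hUbd⟩ := H1 (fun k => Encodable.encode (S k)) hSrec
  refine ⟨fun k => shrink (U k, runMax d k), ?_, ?_, ?_⟩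
  · exact primrec_shrink.to_comp.comp (hUc.pair (computable_runMax hd))
  · intro k
    exact mem_shrink (hUtr k) ((hSbd k).trans ((hdom k).trans (le_runMax d k))) (hStr k)
  · intro k
    exact (card_shrink_le (U k) (runMax d k)).trans (Nat.mul_le_mul_right _ (hUbd k))

/-- If every function computed by `A` has a computable trace bounded by a computable bound
`h₁`, every function computed by `B` has an `A`-computable trace bounded by a bound
`h₂ ≤_T A`, and every `A`-computable function is dominated by a computable function, then
there is a computable `h̃₂` dominating `h₂` such that every function computed by `B` has a
computable trace bounded by the pointwise product `h₁ · h̃₂`.  In particular, if `A` is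
computably traceable and `B` is computably traceable relative to `A`, then `B` is
computably traceable. -/
theorem traceable_transitive :
    (∀ A B h₁ h₂ : ℕ → ℕ,
      Computable h₁ → IsBound h₁ →
      (∀ g : ℕ → ℕ, TuringLE g A →
        ∃ T : ℕ → Finset ℕ, Computable T ∧ Traces T g ∧ BoundFor h₁ T) →
      TuringLE h₂ A → IsBound h₂ →
      (∀ g : ℕ → ℕ, TuringLE g B →
        ∃ T : ℕ → Finset ℕ, TraceRecIn ↑A T ∧ Traces T g ∧ BoundFor h₂ T) →
      (∀ g : ℕ → ℕ, TuringLE g A → ∃ g' : ℕ → ℕ, Computable g' ∧ ∀ n, g n ≤ g' n) →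
      ∃ h₂' : ℕ → ℕ, Computable h₂' ∧ (∀ n, h₂ n ≤ h₂' n) ∧
        ∀ g : ℕ → ℕ, TuringLE g B →
          ∃ T : ℕ → Finset ℕ, Computable T ∧ Traces T g ∧
            BoundFor (fun k => h₁ k * h₂' k) T) ∧
    (∀ A B : ℕ → ℕ, CompTraceable A → CompTraceableIn A B → CompTraceable B) := by
  constructor
  · intro A B h₁ h₂ hc₁ _ H1 hle₂ hb₂ H2 Hdom
    obtain ⟨h₂', hc₂', _, _, hdom₂, hmain⟩ := main_aux A B h₁ h₂ H1 hle₂ H2 Hdom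
    exact ⟨h₂', hc₂', hdom₂, hmain⟩
  · rintro A B ⟨h₁, hc₁, hb₁, H1⟩ ⟨h₂, hle₂, hb₂, H2⟩
    have Hdom : ∀ g : ℕ → ℕ, TuringLE g A →
        ∃ g' : ℕ → ℕ, Computable g' ∧ ∀ n, g n ≤ g' n := by
      intro g hg
      obtain ⟨T, hTc, hTtr, _⟩ := H1 g hg
      refine ⟨fun k => TraceAux.lmax (TraceAux.f2l (T k)),
        (TraceAux.primrec_lmax.comp TraceAux.primrec_f2l).to_comp.comp hTc, fun k => ?_⟩
      exact TraceAux.le_lmax (TraceAux.mem_f2l.2 (hTtr k))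
    obtain ⟨h₂', hc₂', hmono, hone, _, hmain⟩ := main_aux A B h₁ h₂ H1 hle₂ H2 Hdom
    refine ⟨fun k => h₁ k * h₂' k, Primrec.nat_mul.to_comp.comp hc₁ hc₂', ⟨?_, ?_⟩, hmain⟩
    · exact fun a b hab => Nat.mul_le_mul (hb₁.1 hab) (hmono hab)
    · intro n
      obtain ⟨k, hk⟩ := hb₁.2 n
      exact ⟨k, hk.trans (Nat.le_mul_of_pos_right _ (hone k))⟩
end

section
/- Every computably traceable function is hyperimmune-free, and conversely every function computed by a hyperimmune-free function has some computable trace (though not necessarily with a uniform computable bound). -/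
open Denumerable Encodable

private def sumF (l : List ℕ) : ℕ := l.foldr (fun b s => b + s) 0

private lemma raise'_foldr (l : List ℕ) (n : ℕ) :
    (Denumerable.raise' l n).foldr max 0 =
      if l.length = 0 then 0 else n + sumF l + (l.length - 1) := by
  induction l generalizing n with
  | nil => rfl
  | cons m t ih =>
    simp only [Denumerable.raise', List.foldr, ih, sumF] at *
    cases t with
    | nil => simp; omega
    | cons a t' =>
      simp only [List.length_cons, if_neg (Nat.succ_ne_zero _)]
      rw [Nat.max_eq_right (by simp; omega)]
      simp [List.foldr]
      omega

private lemma sup_raise'Finset (l : List ℕ) (n : ℕ) :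
    (Denumerable.raise'Finset l n).sup id =
      if l.length = 0 then 0 else n + sumF l + (l.length - 1) := by
  rw [← raise'_foldr l n, Finset.sup_def]
  have hv : (Denumerable.raise'Finset l n).val = ↑(Denumerable.raise' l n) := rfl
  rw [hv, Multiset.map_id, Multiset.sup_coe]
  rfl

private lemma ofNat_finset_eq (n : ℕ) :
    Denumerable.ofNat (Finset ℕ) n = Denumerable.raise'Finset (ofNat (List ℕ) n) 0 := by
  show Finset.map (Denumerable.eqv ℕ).symm.toEmbedding _ = _
  ext a
  simp [Finset.mem_map, Denumerable.eqv]

private lemma computable_finset_sup : Computable (fun s : Finset ℕ => s.sup id) := by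
  have hsum : Primrec sumF :=
    (Primrec.list_foldr Primrec.id (Primrec.const 0)
      (Primrec.nat_add.comp (Primrec.fst.comp Primrec.snd)
        (Primrec.snd.comp Primrec.snd)).to₂)
  have hF : Primrec (fun l : List ℕ =>
      if l.length = 0 then 0 else 0 + sumF l + (l.length - 1)) :=
    Primrec.ite (Primrec.eq.comp Primrec.list_length (Primrec.const 0)) (Primrec.const 0)
      (Primrec.nat_add.comp (Primrec.nat_add.comp (Primrec.const 0) hsum)
        (Primrec.nat_sub.comp Primrec.list_length (Primrec.const 1)))
  have key : ∀ k : ℕ, (Denumerable.ofNat (Finset ℕ) k).sup id =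
      (if (ofNat (List ℕ) k).length = 0 then 0
        else 0 + sumF (ofNat (List ℕ) k) + ((ofNat (List ℕ) k).length - 1)) := fun k => by
    rw [ofNat_finset_eq, sup_raise'Finset]
  refine ((hF.comp ((Primrec.ofNat (List ℕ)).comp Primrec.encode)).to_comp).of_eq fun s => ?_
  rw [← key]
  congr 1
  exact Denumerable.ofNat_encode s

private lemma range_eq_raise' (n : ℕ) :
    Finset.range n = Denumerable.raise'Finset (List.replicate n 0) 0 := by
  have key : ∀ (k m : ℕ), Denumerable.raise' (List.replicate k 0) m = List.range' m k := by
    intro k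
    induction k with
    | zero => intro m; rfl
    | succ k ih => intro m; simp [List.replicate, Denumerable.raise', ih, List.range']
  apply Finset.val_inj.mp
  show Multiset.range n = ↑(Denumerable.raise' (List.replicate n 0) 0)
  rw [key, Multiset.range, List.range_eq_range']

private lemma computable_finset_range : Computable (fun n : ℕ => Finset.range n) := by
  have hrep : Primrec (fun n : ℕ => List.replicate n (0 : ℕ)) := by
    have := Primrec.list_map Primrec.list_range
      ((Primrec.const 0).comp Primrec.snd).to₂
    exact this.of_eq fun n => by simp [List.map_const']
  have h : Computable (fun n : ℕ =>
      ofNat (Finset ℕ) (encode (List.replicate n (0 : ℕ)))) :=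
    ((Primrec.ofNat (Finset ℕ)).comp (Primrec.encode.comp hrep)).to_comp
  refine h.of_eq fun n => ?_
  rw [range_eq_raise']
  have : Denumerable.ofNat (List ℕ) (encode (List.replicate n (0:ℕ))) =
      List.replicate n 0 := Denumerable.ofNat_encode _
  rw [ofNat_finset_eq, this]


/-- Every computably traceable function is hyperimmune-free, and every function computed
by a hyperimmune-free function has some computable trace (not necessarily with a uniform
computable bound). -/

theorem traceable_and_hif :
    (∀ f : ℕ → ℕ, CompTraceable f → HIF f) ∧
    (∀ f : ℕ → ℕ, HIF f → ∀ g : ℕ → ℕ, TuringLE g f →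
      ∃ T : ℕ → Finset ℕ, Computable T ∧ Traces T g) := by
  constructor
  · rintro f ⟨h, -, -, hT⟩ g hg
    obtain ⟨T, hTc, htr, -⟩ := hT g hg
    exact ⟨fun n => (T n).sup id, computable_finset_sup.comp hTc,
      fun n => Finset.le_sup (f := id) (htr n)⟩
  · rintro f hf g hg
    obtain ⟨g', hg'c, hdom⟩ := hf g hg
    refine ⟨fun k => Finset.range (g' k + 1),
      computable_finset_range.comp (Primrec.succ.to_comp.comp hg'c), fun k => ?_⟩
    exact Finset.mem_range.mpr (Nat.lt_succ_of_le (hdom k))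
end
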